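/- Let π = a + b·i be a primary Gaussian prime of norm p (so p = a² + b² is prime, and π ≡ 1 mod 2+2i). Then the quartic residue symbol of 2 modulo π equals (-i)^{b/2}; in particular b is even. -/

import Mathlib

/- Auxiliary lemmas -/

lemma aux_pow_period {M : Type*} [Monoid M] {u : M} (hu : u ^ 4 = 1)
    {m n : ℕ} (h : m % 4 = n % 4) : u ^ m = u ^ n := by
  conv_lhs => rw [← Nat.div_add_mod m 4]
  conv_rhs => rw [← Nat.div_add_mod n 4]
  rw [pow_add, pow_add, pow_mul, pow_mul, hu, one_pow, one_pow, h]

lemma aux_fourth_roots (x : GaussianInt) (hx : x ^ 4 = 1) :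
    x = 1 ∨ x = -1 ∨ x = ⟨0,1⟩ ∨ x = -⟨0,1⟩ := by
  have hi : (⟨0,1⟩ : GaussianInt) ^ 2 = -1 := by decide
  have h0 : (x - 1) * (x + 1) * (x - ⟨0,1⟩) * (x + ⟨0,1⟩) = 0 := by
    linear_combination hx + (1 - x^2) * hi
  rcases mul_eq_zero.mp h0 with h | h
  · rcases mul_eq_zero.mp h with h | h
    · rcases mul_eq_zero.mp h with h | h
      · exact Or.inl (by linear_combination h)
      · exact Or.inr (Or.inl (by linear_combination h))
    · exact Or.inr (Or.inr (Or.inl (by linear_combination h)))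
  · exact Or.inr (Or.inr (Or.inr (by linear_combination h)))

lemma aux_key (x y j : ZMod 16) (h2 : 8*x = 8) (h4 : 4*(x+y) = 4)
    (hj : ((y-x)^2 = 1 ∧ j = 0) ∨ ((y-x)^2 = 9 ∧ j = 2)) :
    3*(x^2+y^2-1) - 2*y + 4*j = 0 := by revert x y j; decide

lemma aux_legA (p : ℕ) [Fact p.Prime] (hp4 : p % 4 = 1) (A B : ℤ)
    (hA : A % 2 = 1) (hpab : (p:ℤ) = A^2 + B^2) (hgcd : Int.gcd B A = 1) :
    legendreSym p A = 1 := by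
  have hoddp : Odd p := by rw [Nat.odd_iff]; omega
  have hm : Odd A.natAbs := by rw [Int.natAbs_odd]; exact Int.odd_iff.mpr hA
  have hdvd : (A.natAbs : ℤ) ∣ (B^2 - (p:ℤ)) := by
    have h1 : (A.natAbs : ℤ) ∣ A := Int.natAbs_dvd.mpr dvd_rfl
    have h2 : B^2 - (p:ℤ) = -A^2 := by rw [hpab]; ring
    rw [h2]
    exact dvd_neg.mpr (h1.trans (dvd_pow_self A (by norm_num)))
  have step1 : legendreSym p A = jacobiSym (A.natAbs : ℤ) p := by
    rw [jacobiSym.legendreSym.to_jacobiSym]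
    rcases Int.natAbs_eq A with h | h
    · rw [← h]
    · conv_lhs => rw [h]
      rw [show (-(A.natAbs:ℤ)) = -1 * (A.natAbs:ℤ) by ring, jacobiSym.mul_left,
        jacobiSym.at_neg_one hoddp, ZMod.χ₄_nat_one_mod_four hp4, one_mul]
  have step2 : jacobiSym (A.natAbs:ℤ) p = jacobiSym p A.natAbs :=
    jacobiSym.quadratic_reciprocity_one_mod_four' hm hp4
  have step3 : jacobiSym (p:ℤ) A.natAbs = jacobiSym (B^2) A.natAbs :=
    jacobiSym.mod_left' (Int.modEq_iff_dvd.mpr hdvd)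
  have step4 : jacobiSym (B^2) A.natAbs = 1 := by
    apply jacobiSym.sq_one'
    rwa [show Int.gcd B (A.natAbs : ℤ) = Int.gcd B A by
      simp [Int.gcd, Int.natAbs_abs]]
  rw [step1, step2, step3, step4]

lemma aux_legC (p : ℕ) [Fact p.Prime] (hp4 : p % 4 = 1) (A B : ℤ)
    (hodd : (B - A) % 2 = 1) (hpab : (p:ℤ) = A^2 + B^2)
    (hgcd : Int.gcd A (B - A) = 1) :
    legendreSym p (B - A) = ZMod.χ₈ ((B - A).natAbs : ZMod 8) := by
  set C := B - A with hC
  set m := C.natAbs with hmdef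
  have hoddp : Odd p := by rw [Nat.odd_iff]; omega
  have hm : Odd m := by rw [hmdef, Int.natAbs_odd]; exact Int.odd_iff.mpr hodd
  have hdvd : (m : ℤ) ∣ (2*A^2 - (p:ℤ)) := by
    have h1 : (m : ℤ) ∣ C := Int.natAbs_dvd.mpr dvd_rfl
    have h2 : 2*A^2 - (p:ℤ) = C * (-(B + A)) := by rw [hpab, hC]; ring
    rw [h2]
    exact h1.mul_right _
  have step1 : legendreSym p C = jacobiSym (m : ℤ) p := by
    rw [jacobiSym.legendreSym.to_jacobiSym]
    rcases Int.natAbs_eq C with h | h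
    · rw [← h]
    · conv_lhs => rw [h]
      rw [show (-(m:ℤ)) = -1 * (m:ℤ) by ring, jacobiSym.mul_left,
        jacobiSym.at_neg_one hoddp, ZMod.χ₄_nat_one_mod_four hp4, one_mul]
  have step2 : jacobiSym (m:ℤ) p = jacobiSym p m :=
    jacobiSym.quadratic_reciprocity_one_mod_four' hm hp4
  have step3 : jacobiSym (p:ℤ) m = jacobiSym (2*A^2) m :=
    jacobiSym.mod_left' (Int.modEq_iff_dvd.mpr hdvd)
  have step4 : jacobiSym (2*A^2) m = jacobiSym 2 m * jacobiSym (A^2) m :=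
    jacobiSym.mul_left 2 (A^2) m
  have step5 : jacobiSym (A^2) m = 1 := by
    apply jacobiSym.sq_one'
    rwa [show Int.gcd A (m : ℤ) = Int.gcd A C by simp [Int.gcd, Int.natAbs_abs, hmdef]]
  have step6 : jacobiSym 2 m = ZMod.χ₈ (m : ZMod 8) := jacobiSym.at_two hm
  rw [step1, step2, step3, step4, step5, step6, mul_one]

lemma aux_chi8 (m : ℕ) (hm : m % 2 = 1) :
    ((ZMod.χ₈ (m : ZMod 8) = 1 ∧ m^2 % 16 = 1) ∨ (ZMod.χ₈ (m : ZMod 8) = -1 ∧ m^2 % 16 = 9)) := by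
  have h1 : ZMod.χ₈ (m : ZMod 8) = ZMod.χ₈ ((m % 8 : ℕ) : ZMod 8) := ZMod.χ₈_nat_mod_eight m
  obtain ⟨q, r, hqr, hrlt⟩ : ∃ q r, m = 8*q + r ∧ r < 8 := ⟨m / 8, m % 8, by omega, by omega⟩
  have hr8 : m % 8 = r := by omega
  have hexp : m^2 = 16*(4*q^2 + q*r) + r^2 := by rw [hqr]; ring
  have hrodd : r % 2 = 1 := by omega
  rw [hr8] at h1
  have hsq : m^2 % 16 = r^2 % 16 := by omega
  interval_cases r
  · omega
  · exact Or.inl ⟨by rw [h1]; decide, by norm_num at hsq; exact hsq⟩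
  · omega
  · exact Or.inr ⟨by rw [h1]; decide, by norm_num at hsq; exact hsq⟩
  · omega
  · exact Or.inr ⟨by rw [h1]; decide, by norm_num at hsq; exact hsq⟩
  · omega
  · exact Or.inl ⟨by rw [h1]; decide, by norm_num at hsq; exact hsq⟩

/-- Let π = a + b·i be a primary Gaussian prime of prime norm p.  Then the quartic residue
symbol of 2 modulo π (the unique fourth root of unity χ with χ ≡ 2^((p-1)/4) mod π)
equals (-i)^{b/2}; in particular b is even.  Since (-i)^4 = 1, the power (-i)^{b/2} for
the integer b/2 is expressed via the representative (b/2) % 4 ∈ {0,1,2,3}. -/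
theorem stmt_5 (π : GaussianInt) (p : ℕ) (hp : p.Prime)
    (hnorm : π.norm = (p : ℤ))
    (hprimary : (2 + 2 * ⟨0, 1⟩ : GaussianInt) ∣ (π - 1))
    (χ : GaussianInt) (hχ4 : χ ^ 4 = 1)
    (hχ : π ∣ (χ - 2 ^ ((p - 1) / 4))) :
    Even π.im ∧ χ = (-(⟨0, 1⟩ : GaussianInt)) ^ ((π.im / 2) % 4).toNat := by
  haveI : Fact p.Prime := ⟨hp⟩
  obtain ⟨q, hq⟩ := hprimary
  rw [show (2 + 2 * ⟨0, 1⟩ : GaussianInt) = (⟨2,2⟩ : GaussianInt) by decide] at hq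
  have h1 := congrArg Zsqrtd.re hq
  have h2 := congrArg Zsqrtd.im hq
  simp only [Zsqrtd.re_sub, Zsqrtd.im_sub, Zsqrtd.re_one, Zsqrtd.im_one,
    Zsqrtd.re_mul, Zsqrtd.im_mul] at h1 h2
  set A := π.re with hA_def
  set B := π.im with hB_def
  have hpab : (p:ℤ) = A^2 + B^2 := by rw [← hnorm, Zsqrtd.norm_def]; ring
  have hAodd : A % 2 = 1 := by omega
  have hBeven : B % 2 = 0 := by omega
  have h4sum : (A + B) % 4 = 1 := by omega
  have hAne : A ≠ 0 := by omega
  have hEven : Even B := ⟨q.re + q.im, by omega⟩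
  have sq_natAbs : ∀ x : ℤ, ((x.natAbs^2 : ℕ) : ℤ) = x^2 := by
    intro x; rw [← Int.natAbs_sq x]; push_cast; ring
  have hBne : B ≠ 0 := by
    intro h
    rw [h] at hpab
    have hpa : p = A.natAbs^2 := by
      have h' : ((A.natAbs^2 : ℕ) : ℤ) = (p:ℤ) := by rw [sq_natAbs]; omega
      exact_mod_cast h'.symm
    exact Nat.Prime.not_prime_pow (le_refl 2) (hpa ▸ hp)
  -- gcd A B = 1
  have hgcdAB : Int.gcd A B = 1 := by
    set d := Int.gcd A B with hd
    have hdA : (d:ℤ) ∣ A := Int.gcd_dvd_left _ _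
    have hdB : (d:ℤ) ∣ B := Int.gcd_dvd_right _ _
    have hd2 : ((d^2 : ℕ) : ℤ) ∣ (p:ℤ) := by
      rw [hpab]; push_cast
      exact dvd_add (pow_dvd_pow_of_dvd hdA 2) (pow_dvd_pow_of_dvd hdB 2)
    have hd2' : d^2 ∣ p := by exact_mod_cast hd2
    have hdp : d ∣ p := dvd_trans (dvd_pow_self d (by norm_num)) hd2'
    rcases (hp.eq_one_or_self_of_dvd d hdp) with h | h
    · exact h
    · exfalso
      rw [h] at hd2'
      have := Nat.le_of_dvd hp.pos hd2'
      nlinarith [hp.two_le]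
  -- p % 4 = 1
  have hp4 : p % 4 = 1 := by
    obtain ⟨k, hk⟩ : ∃ k, A = 2*k+1 := ⟨(A-1)/2, by omega⟩
    obtain ⟨t, ht⟩ : ∃ t, B = 2*t := ⟨B/2, by omega⟩
    have e1 : A^2 = 4*(k*(k+1)) + 1 := by rw [hk]; ring
    have e2 : B^2 = 4*(t*t) := by rw [ht]; ring
    omega
  -- nonvanishing of casts
  have hcast : ∀ x : ℤ, x ≠ 0 → x^2 < (p:ℤ) → ((x : ZMod p) ≠ 0) := by
    intro x hx hlt
    rw [Ne, ZMod.intCast_zmod_eq_zero_iff_dvd]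
    intro hdvd
    have h1' : (p:ℤ) ≤ |x| := Int.le_of_dvd (abs_pos.mpr hx) ((dvd_abs _ _).mpr hdvd)
    have h2' : |x|^2 = x^2 := sq_abs x
    nlinarith [hp.two_le, abs_nonneg x]
  have hAF : ((A : ℤ) : ZMod p) ≠ 0 := hcast A hAne (by nlinarith [sq_pos_of_ne_zero hBne])
  have hBF : ((B : ℤ) : ZMod p) ≠ 0 := hcast B hBne (by nlinarith [sq_pos_of_ne_zero hAne])
  -- the square root of -1 in ZMod p determined by π
  set z : ZMod p := -((A:ℤ) : ZMod p) * (((B:ℤ) : ZMod p))⁻¹ with hzdef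
  have hBinv : ((B:ℤ) : ZMod p) * ((B:ℤ) : ZMod p)⁻¹ = 1 := mul_inv_cancel₀ hBF
  have hzB : z * ((B:ℤ) : ZMod p) = -((A:ℤ) : ZMod p) := by
    rw [hzdef, mul_assoc, mul_comm (((B:ℤ) : ZMod p))⁻¹, hBinv, mul_one]
  have hp0 : ((A:ℤ) : ZMod p)^2 + ((B:ℤ) : ZMod p)^2 = 0 := by
    have h0 : (((p:ℤ) : ZMod p)) = 0 := by simp
    rw [hpab] at h0
    push_cast at h0
    linear_combination h0
  have hz2 : z^2 = -1 := by
    have h1' : z^2 * ((B:ℤ):ZMod p)^2 = (-1) * ((B:ℤ):ZMod p)^2 := by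
      rw [← mul_pow, hzB]
      linear_combination hp0
    exact mul_right_cancel₀ (pow_ne_zero 2 hBF) h1'
  set φ : GaussianInt →+* ZMod p := Zsqrtd.lift ⟨z, by
    push_cast
    linear_combination hz2⟩ with hφdef
  have hφeval : ∀ x : GaussianInt, φ x = (x.re : ZMod p) + (x.im : ZMod p) * z := fun _ => rfl
  have hφπ : φ π = 0 := by
    rw [hφeval, ← hA_def, ← hB_def, mul_comm, hzB]; ring
  have hφχ : φ χ = (2 : ZMod p)^((p-1)/4) := by
    obtain ⟨d, hd⟩ := hχ
    have hχeq : χ = 2^((p-1)/4) + π * d := by linear_combination hd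
    rw [hχeq, map_add, map_mul, hφπ, zero_mul, add_zero, map_pow, map_ofNat]
  have hvi : φ ⟨0,1⟩ = z := by rw [hφeval]; push_cast; ring
  -- MAIN VALUE COMPUTATION
  set n := (p-1)/4 with hn_def
  set k := ((B/2) % 4).toNat with hk_def
  have hval : (2 : ZMod p)^n = (-z)^k := by
    have he : p / 2 = 2 * n := by omega
    have h4n : (4 * n : ℤ) = A^2 + B^2 - 1 := by rw [← hpab]; omega
    have hkZ : (k : ℤ) = (B/2) % 4 := Int.toNat_of_nonneg (Int.emod_nonneg _ (by norm_num))
    have hgcdBA : Int.gcd B A = 1 := by rw [Int.gcd_comm]; exact hgcdAB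
    have hgcdAC : Int.gcd A (B - A) = 1 := by
      have g1 : (Int.gcd A (B-A) : ℤ) ∣ A := Int.gcd_dvd_left _ _
      have g2 : (Int.gcd A (B-A) : ℤ) ∣ B - A := Int.gcd_dvd_right _ _
      have g3 : (Int.gcd A (B-A) : ℤ) ∣ (Int.gcd A B : ℤ) :=
        Int.dvd_coe_gcd g1 (by have := dvd_add g2 g1; simpa using this)
      rw [hgcdAB] at g3
      exact_mod_cast Int.eq_one_of_dvd_one (by positivity) g3
    have hCodd : (B - A) % 2 = 1 := by omega
    have hLA : legendreSym p A = 1 := aux_legA p hp4 A B hAodd hpab hgcdBA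
    have hLC := aux_legC p hp4 A B hCodd hpab hgcdAC
    have hchi := aux_chi8 (B-A).natAbs
      (Nat.odd_iff.mp (Int.natAbs_odd.mpr (Int.odd_iff.mpr hCodd)))
    have hALpow : ((A:ℤ) : ZMod p)^(p/2) = 1 := by
      have h := legendreSym.eq_pow p A
      rw [hLA] at h
      exact_mod_cast h.symm
    have hBpow : ((B:ℤ) : ZMod p)^(p/2) = (-1 : ZMod p)^n := by
      have hA_eq : ((A:ℤ):ZMod p) = -(((B:ℤ):ZMod p) * z) := by linear_combination hzB
      have h1' : (1 : ZMod p) = ((B:ℤ):ZMod p)^(p/2) * (-1:ZMod p)^n :=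
        calc (1 : ZMod p) = ((A:ℤ):ZMod p)^(p/2) := hALpow.symm
          _ = (-(((B:ℤ):ZMod p) * z))^(2*n) := by rw [hA_eq, he]
          _ = ((((B:ℤ):ZMod p) * z)^2)^n := by rw [pow_mul, neg_sq]
          _ = (((B:ℤ):ZMod p)^2 * z^2)^n := by rw [mul_pow]
          _ = (((B:ℤ):ZMod p)^2 * -1)^n := by rw [hz2]
          _ = ((B:ℤ):ZMod p)^(2*n) * (-1:ZMod p)^n := by rw [mul_pow, ← pow_mul]
          _ = ((B:ℤ):ZMod p)^(p/2) * (-1:ZMod p)^n := by rw [he]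
      have hw : (-1 : ZMod p)^n * (-1 : ZMod p)^n = 1 := by
        rw [← pow_add]; exact Even.neg_one_pow ⟨n, by ring⟩
      calc ((B:ℤ) : ZMod p)^(p/2) = ((B:ℤ) : ZMod p)^(p/2) * ((-1:ZMod p)^n * (-1:ZMod p)^n) := by
            rw [hw, mul_one]
        _ = ((((B:ℤ) : ZMod p)^(p/2)) * (-1:ZMod p)^n) * (-1:ZMod p)^n := by ring
        _ = (-1 : ZMod p)^n := by rw [← h1', one_mul]
    have h2fac : (2 : ZMod p) = -z * (1+z)^2 := by linear_combination (z+2)*hz2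
    have hC : (1+z) * ((B:ℤ) : ZMod p) = ((B - A : ℤ) : ZMod p) := by
      push_cast
      linear_combination hzB
    have hkey1 : (2 : ZMod p)^n * ((B:ℤ):ZMod p)^(p/2)
        = (-z)^n * (((B-A:ℤ)):ZMod p)^(p/2) := by
      calc (2 : ZMod p)^n * ((B:ℤ):ZMod p)^(p/2)
          = ((-z) * (1+z)^2)^n * ((B:ℤ):ZMod p)^(2*n) := by rw [← h2fac, he]
        _ = (-z)^n * (((1+z) * ((B:ℤ):ZMod p))^(2*n)) := by
            rw [mul_pow, mul_pow, ← pow_mul, mul_comm 2 n]; ring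
        _ = (-z)^n * (((B-A:ℤ)):ZMod p)^(p/2) := by rw [hC, he]
    have hmain : (2 : ZMod p)^n = z^n * ((((B-A:ℤ)):ZMod p)^(p/2)) := by
      have hw : (-1 : ZMod p)^n * (-1 : ZMod p)^n = 1 := by
        rw [← pow_add]; exact Even.neg_one_pow ⟨n, by ring⟩
      have hzz : (-z : ZMod p)^n * (-1 : ZMod p)^n = z^n := by
        rw [← mul_pow]; norm_num
      calc (2 : ZMod p)^n = (2 : ZMod p)^n * ((-1:ZMod p)^n * (-1:ZMod p)^n) := by rw [hw, mul_one]
        _ = ((2 : ZMod p)^n * ((B:ℤ):ZMod p)^(p/2)) * (-1:ZMod p)^n := by rw [hBpow]; ring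
        _ = ((-z)^n * (-1:ZMod p)^n) * (((B-A:ℤ)):ZMod p)^(p/2) := by rw [hkey1]; ring
        _ = z^n * ((((B-A:ℤ)):ZMod p)^(p/2)) := by rw [hzz]
    have hu4 : (-z : ZMod p)^4 = 1 := by
      have h' : (-z : ZMod p)^4 = (z^2)^2 := by ring
      rw [h', hz2]; norm_num
    have hz3 : (-z : ZMod p)^(3*n) = z^n := by
      have h3 : (-z : ZMod p)^3 = z := by linear_combination (-z)*hz2
      rw [pow_mul, h3]
    have hCpow := legendreSym.eq_pow p (B - A)
    rw [hLC] at hCpow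
    rcases hchi with ⟨hx1, hs1⟩ | ⟨hx1, hs1⟩
    · have hCsq : (B-A)^2 % 16 = 1 := by
        have hcast2 : (((B-A).natAbs^2 : ℕ) : ℤ) = (B-A)^2 := sq_natAbs _
        omega
      have hCF : (((B-A:ℤ)):ZMod p)^(p/2) = 1 := by
        rw [hx1] at hCpow
        exact_mod_cast hCpow.symm
      have hx8 : 8*((A : ZMod 16)) = 8 := by
        have d1 : ((8*A - 8 : ℤ) : ZMod 16) = 0 :=
          (ZMod.intCast_zmod_eq_zero_iff_dvd _ 16).mpr (by omega)
        push_cast at d1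
        linear_combination d1
      have hy4 : 4*((A : ZMod 16) + (B : ZMod 16)) = 4 := by
        have d2 : ((4*(A+B) - 4 : ℤ) : ZMod 16) = 0 :=
          (ZMod.intCast_zmod_eq_zero_iff_dvd _ 16).mpr (by omega)
        push_cast at d2
        linear_combination d2
      have hjc : ((B : ZMod 16) - (A : ZMod 16))^2 = 1 := by
        have d3 : (((B-A)^2 - 1 : ℤ) : ZMod 16) = 0 := by
          rw [ZMod.intCast_zmod_eq_zero_iff_dvd]
          obtain ⟨M, hM⟩ : ∃ M, (B-A)^2 = M := ⟨_, rfl⟩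
          rw [hM] at hCsq ⊢
          omega
        push_cast at d3
        linear_combination d3
      have hkey := aux_key (A : ZMod 16) (B : ZMod 16) 0 hx8 hy4 (Or.inl ⟨hjc, rfl⟩)
      have hZ : (((3*(A^2+B^2-1) - 2*B : ℤ)) : ZMod 16) = 0 := by
        push_cast
        linear_combination hkey
      have hdvd : (16:ℤ) ∣ 3*(A^2+B^2-1) - 2*B := (ZMod.intCast_zmod_eq_zero_iff_dvd _ 16).mp hZ
      rw [← h4n] at hdvd
      have hmod : (3*n) % 4 = k % 4 := by omega
      rw [hmain, hCF, mul_one, ← hz3]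
      exact aux_pow_period hu4 hmod
    · have hCsq : (B-A)^2 % 16 = 9 := by
        have hcast2 : (((B-A).natAbs^2 : ℕ) : ℤ) = (B-A)^2 := sq_natAbs _
        omega
      have hCF : (((B-A:ℤ)):ZMod p)^(p/2) = -1 := by
        rw [hx1] at hCpow
        exact_mod_cast hCpow.symm
      have hx8 : 8*((A : ZMod 16)) = 8 := by
        have d1 : ((8*A - 8 : ℤ) : ZMod 16) = 0 :=
          (ZMod.intCast_zmod_eq_zero_iff_dvd _ 16).mpr (by omega)
        push_cast at d1
        linear_combination d1
      have hy4 : 4*((A : ZMod 16) + (B : ZMod 16)) = 4 := by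
        have d2 : ((4*(A+B) - 4 : ℤ) : ZMod 16) = 0 :=
          (ZMod.intCast_zmod_eq_zero_iff_dvd _ 16).mpr (by omega)
        push_cast at d2
        linear_combination d2
      have hjc : ((B : ZMod 16) - (A : ZMod 16))^2 = 9 := by
        have d3 : (((B-A)^2 - 9 : ℤ) : ZMod 16) = 0 := by
          rw [ZMod.intCast_zmod_eq_zero_iff_dvd]
          obtain ⟨M, hM⟩ : ∃ M, (B-A)^2 = M := ⟨_, rfl⟩
          rw [hM] at hCsq ⊢
          omega
        push_cast at d3
        linear_combination d3
      have hkey := aux_key (A : ZMod 16) (B : ZMod 16) 2 hx8 hy4 (Or.inr ⟨hjc, rfl⟩)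
      have hZ : (((3*(A^2+B^2-1) - 2*B + 8 : ℤ)) : ZMod 16) = 0 := by
        push_cast
        linear_combination hkey
      have hdvd : (16:ℤ) ∣ 3*(A^2+B^2-1) - 2*B + 8 :=
        (ZMod.intCast_zmod_eq_zero_iff_dvd _ 16).mp hZ
      rw [← h4n] at hdvd
      have hmod : (3*n + 2) % 4 = k % 4 := by omega
      have hm2 : (-1 : ZMod p) = (-z)^2 := by linear_combination -hz2
      rw [hmain, hCF, hm2, ← hz3, ← pow_add]
      exact aux_pow_period hu4 hmod
  -- UNIQUENESS AMONG FOURTH ROOTS OF UNITY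
  refine ⟨hEven, ?_⟩
  have hr4 : ((-(⟨0,1⟩ : GaussianInt)) ^ k) ^ 4 = 1 := by
    rw [← pow_mul, mul_comm, pow_mul, (by decide : (-(⟨0,1⟩:GaussianInt))^4 = 1), one_pow]
  have hφr : φ ((-(⟨0,1⟩ : GaussianInt)) ^ k) = (-z)^k := by
    rw [map_pow, map_neg, hvi]
  have hφeq : φ χ = φ ((-(⟨0,1⟩ : GaussianInt)) ^ k) := by
    rw [hφχ, hφr, hval]
  -- distinctness facts
  have hp5 : 5 ≤ p := by have := hp.two_le; omega
  have h2ne : (2 : ZMod p) ≠ 0 := by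
    intro h
    have h'' : ((2:ℕ) : ZMod p) = 0 := by exact_mod_cast h
    rw [ZMod.natCast_eq_zero_iff] at h''
    have := Nat.le_of_dvd (by norm_num) h''
    omega
  have n1 : (1 : ZMod p) ≠ -1 := fun h => h2ne (by linear_combination h)
  have n2 : (1 : ZMod p) ≠ z := fun h => h2ne (by linear_combination (1+z)*h + hz2)
  have n3 : (1 : ZMod p) ≠ -z := fun h => h2ne (by linear_combination (1-z)*h + hz2)
  have n4 : (-1 : ZMod p) ≠ z := fun h => h2ne (by linear_combination (z-1)*h + hz2)
  have n5 : (-1 : ZMod p) ≠ -z := fun h => h2ne (by linear_combination (-(1+z))*h + hz2)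
  have n6 : z ≠ -z := fun h => h2ne (by linear_combination (-z)*h + 2*hz2)
  rcases aux_fourth_roots χ hχ4 with rfl | rfl | rfl | rfl <;>
    rcases aux_fourth_roots _ hr4 with h' | h' | h' | h' <;>
    rw [h'] at hφeq ⊢ <;>
    simp only [map_one, map_neg, hvi] at hφeq <;>
    first
      | rfl
      | exact absurd hφeq n1 | exact absurd hφeq.symm n1
      | exact absurd hφeq n2 | exact absurd hφeq.symm n2
      | exact absurd hφeq n3 | exact absurd hφeq.symm n3
      | exact absurd hφeq n4 | exact absurd hφeq.symm n4
      | exact absurd hφeq n5 | exact absurd hφeq.symm n5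
      | exact absurd hφeq n6 | exact absurd hφeq.symm n6
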